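/- arXiv:1604.08542 — 4 statements merged into one kernel-verified Lean document; each statement's English description precedes it below -/
import Mathlib

section
/- Let (ξ(n)) be a sequence of reals with |ξ(n)| ≤ C₁(1+n)^{-a} for all n ≥ 1, and let (ψ₁(n)), (ψ₂(n)) be sequences whose truncated ℓ² norms satisfy ‖ψ₁‖_L · ‖ψ₂‖_L ≤ C₂(1+L)^b for all natural numbers L ≥ 1, where ‖ψ‖_L = (Σ_{n=1}^{L} |ψ(n)|²)^{1/2}. If a > b > 0, then the series Σ_{n=1}^{∞} |ξ(n) ψ₁(n) ψ₂(n)| converges. -/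
open Finset Real

lemma mvt_rpow (a : ℝ) (ha : 0 < a) (x : ℝ) (hx : 1 ≤ x) :
    x ^ (-a) - (x + 1) ^ (-a) ≤ a * x ^ (-a - 1) := by
  have hx0 : (0:ℝ) < x := lt_of_lt_of_le one_pos hx
  obtain ⟨c, hc, hceq⟩ := exists_hasDerivAt_eq_slope (fun t => t ^ (-a))
    (fun t => -a * t ^ (-a - 1)) (lt_add_one x)
    (fun t ht => (Real.continuousAt_rpow_const t (-a)
      (Or.inl (ne_of_gt (lt_of_lt_of_le hx0 ht.1)))).continuousWithinAt)
    (fun t ht => Real.hasDerivAt_rpow_const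
      (Or.inl (ne_of_gt (lt_trans hx0 ht.1))))
  have hc0 : x < c := hc.1
  have h1 : x + 1 - x = 1 := by ring
  rw [h1, div_one] at hceq
  have heq : x ^ (-a) - (x + 1) ^ (-a) = a * c ^ (-a - 1) := by nlinarith [hceq]
  rw [heq]
  have : c ^ (-a - 1) ≤ x ^ (-a - 1) :=
    Real.rpow_le_rpow_of_nonpos hx0 hc0.le (by linarith)
  nlinarith

/-- Truncated ℓ² norm: `(∑_{n=1}^{L} |ψ(n)|²)^{1/2}`. -/
noncomputable def trnorm (ψ : ℕ → ℝ) (L : ℕ) : ℝ :=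
  Real.sqrt (∑ n ∈ Finset.Icc 1 L, (ψ n) ^ 2)

lemma cs_trnorm (ψ₁ ψ₂ : ℕ → ℝ) (L : ℕ) :
    ∑ n ∈ Finset.Icc 1 L, |ψ₁ n * ψ₂ n| ≤ trnorm ψ₁ L * trnorm ψ₂ L := by
  have key := Finset.sum_mul_sq_le_sq_mul_sq (Finset.Icc 1 L)
    (fun n => |ψ₁ n|) (fun n => |ψ₂ n|)
  simp only [sq_abs] at key
  have hS : 0 ≤ ∑ n ∈ Finset.Icc 1 L, |ψ₁ n| * |ψ₂ n| :=
    Finset.sum_nonneg fun n _ => mul_nonneg (abs_nonneg _) (abs_nonneg _)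
  have hA : 0 ≤ ∑ n ∈ Finset.Icc 1 L, (ψ₁ n) ^ 2 :=
    Finset.sum_nonneg fun n _ => sq_nonneg _
  have habs : ∑ n ∈ Finset.Icc 1 L, |ψ₁ n * ψ₂ n|
      = ∑ n ∈ Finset.Icc 1 L, |ψ₁ n| * |ψ₂ n| := by
    simp [abs_mul]
  rw [habs]
  have : ∑ n ∈ Finset.Icc 1 L, |ψ₁ n| * |ψ₂ n|
      ≤ Real.sqrt ((∑ n ∈ Finset.Icc 1 L, (ψ₁ n) ^ 2) *
        (∑ n ∈ Finset.Icc 1 L, (ψ₂ n) ^ 2)) := by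
    rw [show (∑ n ∈ Finset.Icc 1 L, |ψ₁ n| * |ψ₂ n|)
        = Real.sqrt ((∑ n ∈ Finset.Icc 1 L, |ψ₁ n| * |ψ₂ n|) ^ 2) by
      rw [Real.sqrt_sq hS]]
    exact Real.sqrt_le_sqrt key
  rwa [Real.sqrt_mul hA] at this

theorem stmt0 (ξ ψ₁ ψ₂ : ℕ → ℝ) (C₁ C₂ a b : ℝ)
    (hC₁ : 0 < C₁) (hC₂ : 0 < C₂) (hb : 0 < b) (hab : b < a)
    (hξ : ∀ n : ℕ, 1 ≤ n → |ξ n| ≤ C₁ * (1 + (n : ℝ)) ^ (-a))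
    (hψ : ∀ L : ℕ, 1 ≤ L → trnorm ψ₁ L * trnorm ψ₂ L ≤ C₂ * (1 + (L : ℝ)) ^ b) :
    Summable (fun n : ℕ => |ξ (n + 1) * ψ₁ (n + 1) * ψ₂ (n + 1)|) := by
  have ha : 0 < a := hb.trans hab
  set p : ℝ := b - a - 1 with hp
  have hp1 : p < -1 := by rw [hp]; linarith
  set u : ℕ → ℝ := fun i => |ψ₁ (i + 1) * ψ₂ (i + 1)| with hudef
  have hu0 : ∀ i, 0 ≤ u i := fun i => abs_nonneg _
  -- partial sums of u
  have hrange : ∀ m : ℕ, ∑ i ∈ range m, u i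
      = ∑ n ∈ Finset.Icc 1 m, |ψ₁ n * ψ₂ n| := by
    intro m
    rw [show Finset.Icc 1 m = Finset.Ico 1 (m + 1) by rw [Finset.Ico_add_one_right_eq_Icc],
      Finset.sum_Ico_eq_sum_range]
    simp [add_comm 1, hudef]
  have hG0 : ∀ m : ℕ, 0 ≤ ∑ i ∈ range m, u i :=
    fun m => Finset.sum_nonneg fun i _ => hu0 i
  have hU : ∀ m : ℕ, ∑ i ∈ range m, u i ≤ C₂ * (1 + (m : ℝ)) ^ b := by
    intro m
    rcases Nat.eq_zero_or_pos m with hm | hm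
    · subst hm
      simp only [range_zero, Finset.sum_empty, Nat.cast_zero, add_zero, Real.one_rpow]
      positivity
    · rw [hrange]
      exact (cs_trnorm ψ₁ ψ₂ m).trans (hψ m hm)
  -- the decreasing weights
  set f : ℕ → ℝ := fun i => ((i : ℝ) + 2) ^ (-a) with hfdef
  have hfpos : ∀ i : ℕ, (0:ℝ) < (i : ℝ) + 2 := fun i => by positivity
  have hf0 : ∀ i, 0 ≤ f i := fun i => Real.rpow_nonneg (hfpos i).le _
  have hfmono : ∀ i : ℕ, f (i + 1) ≤ f i := by
    intro i
    apply Real.rpow_le_rpow_of_nonpos (hfpos i) (by push_cast; linarith) (by linarith)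
  have hfdiff : ∀ i : ℕ, f i - f (i + 1) ≤ a * ((i : ℝ) + 2) ^ (-a - 1) := by
    intro i
    have := mvt_rpow a ha ((i : ℝ) + 2) (by linarith [Nat.cast_nonneg (α := ℝ) i])
    have h3 : ((i : ℝ) + 2) + 1 = ((i + 1 : ℕ) : ℝ) + 2 := by push_cast; ring
    rw [h3] at this
    exact this
  -- summable majorant
  have hTsum : Summable (fun i : ℕ => ((i : ℝ) + 2) ^ p) := by
    have h := (Real.summable_nat_rpow (p := p)).mpr hp1
    have : Summable fun n : ℕ => ((n + 2 : ℕ) : ℝ) ^ p := (summable_nat_add_iff 2).mpr h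
    convert this using 2 with i
    push_cast
    ring_nf
  set T : ℝ := ∑' i : ℕ, ((i : ℝ) + 2) ^ p with hT
  have hT0 : 0 ≤ T := tsum_nonneg fun i => Real.rpow_nonneg (hfpos i).le _
  -- uniform bound on partial sums
  apply summable_of_sum_range_le (c := C₁ * (C₂ + a * C₂ * T))
    (fun n => abs_nonneg _)
  intro N
  have step1 : ∑ i ∈ range N, |ξ (i + 1) * ψ₁ (i + 1) * ψ₂ (i + 1)|
      ≤ C₁ * ∑ i ∈ range N, f i * u i := by
    rw [Finset.mul_sum]
    apply Finset.sum_le_sum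
    intro i _
    rw [mul_assoc, abs_mul]
    have hξi := hξ (i + 1) (Nat.le_add_left 1 i)
    have hcast : (1 : ℝ) + ((i + 1 : ℕ) : ℝ) = (i : ℝ) + 2 := by push_cast; ring
    rw [hcast] at hξi
    calc |ξ (i + 1)| * |ψ₁ (i + 1) * ψ₂ (i + 1)|
        ≤ (C₁ * f i) * u i := by
          exact mul_le_mul_of_nonneg_right hξi (hu0 i)
      _ = C₁ * (f i * u i) := by ring
  refine step1.trans ?_
  have habel := Finset.sum_range_by_parts f u N
  simp only [smul_eq_mul] at habel
  rw [habel]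
  have hterm1 : f (N - 1) * ∑ i ∈ range N, u i ≤ C₂ := by
    rcases Nat.eq_zero_or_pos N with hN | hN
    · subst hN; simpa using hC₂.le
    · have hcast : ((N - 1 : ℕ) : ℝ) + 2 = 1 + (N : ℝ) := by
        have : ((N - 1 : ℕ) : ℝ) = (N : ℝ) - 1 := by
          rw [Nat.cast_sub hN]; simp
        rw [this]; ring
      have hbase : (1:ℝ) ≤ 1 + (N : ℝ) := by
        have := Nat.cast_nonneg (α := ℝ) N; linarith
      calc f (N - 1) * ∑ i ∈ range N, u i
          ≤ (1 + (N : ℝ)) ^ (-a) * (C₂ * (1 + (N : ℝ)) ^ b) := by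
            apply mul_le_mul _ (hU N) (hG0 N) (Real.rpow_nonneg (by linarith) _)
            rw [hfdef]; simp only []; rw [hcast]
        _ = C₂ * (1 + (N : ℝ)) ^ (b - a) := by
            rw [show b - a = -a + b by ring, Real.rpow_add (by linarith)]; ring
        _ ≤ C₂ * 1 := by
            apply mul_le_mul_of_nonneg_left _ hC₂.le
            exact Real.rpow_le_one_of_one_le_of_nonpos hbase (by linarith)
        _ = C₂ := mul_one _
  have hterm2 : -∑ i ∈ range (N - 1), (f (i + 1) - f i) * ∑ j ∈ range (i + 1), u j
      ≤ a * C₂ * T := by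
    rw [← Finset.sum_neg_distrib]
    have : ∀ i ∈ range (N - 1),
        -((f (i + 1) - f i) * ∑ j ∈ range (i + 1), u j)
          ≤ a * C₂ * ((i : ℝ) + 2) ^ p := by
      intro i _
      rw [neg_mul_eq_neg_mul, neg_sub]
      have hG : ∑ j ∈ range (i + 1), u j ≤ C₂ * ((i : ℝ) + 2) ^ b := by
        have := hU (i + 1)
        have hc : (1 : ℝ) + ((i + 1 : ℕ) : ℝ) = (i : ℝ) + 2 := by push_cast; ring
        rwa [hc] at this
      calc (f i - f (i + 1)) * ∑ j ∈ range (i + 1), u j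
          ≤ (a * ((i : ℝ) + 2) ^ (-a - 1)) * (C₂ * ((i : ℝ) + 2) ^ b) := by
            apply mul_le_mul (hfdiff i) hG (hG0 _)
            positivity
        _ = a * C₂ * ((i : ℝ) + 2) ^ p := by
            rw [hp, show b - a - 1 = (-a - 1) + b by ring,
              Real.rpow_add (hfpos i)]; ring
    refine (Finset.sum_le_sum this).trans ?_
    rw [show ∀ (s : Finset ℕ), ∑ i ∈ s, a * C₂ * ((i : ℝ) + 2) ^ p
        = a * C₂ * ∑ i ∈ s, ((i : ℝ) + 2) ^ p from fun s => by rw [Finset.mul_sum]]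
    apply mul_le_mul_of_nonneg_left _ (by positivity)
    exact Summable.sum_le_tsum _ (fun i _ => Real.rpow_nonneg (hfpos i).le _) hTsum
  have : f (N - 1) * ∑ i ∈ range N, u i
      - ∑ i ∈ range (N - 1), (f (i + 1) - f i) * ∑ j ∈ range (i + 1), u j
      ≤ C₂ + a * C₂ * T := by
    have := add_le_add hterm1 hterm2
    linarith
  calc C₁ * (f (N - 1) * ∑ i ∈ range N, u i
      - ∑ i ∈ range (N - 1), (f (i + 1) - f i) * ∑ j ∈ range (i + 1), u j)
      ≤ C₁ * (C₂ + a * C₂ * T) := mul_le_mul_of_nonneg_left this hC₁.le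
end

section
/- Let u₁, u₂ : ℕ → ℝ with ‖u₁‖_L ≥ L^{γ₁} and ‖u₂‖_L ≤ L^{γ₂} for all large L, with γ₂ ≥ γ₁ > 0, and let w : ℕ → ℝ satisfy |w(n)| ≤ C(1+n)^{-γ} with γ > γ₂ − γ₁. Then ‖w·u₂‖_L / ‖u₁‖_L → 0 as L → ∞. -/
section Stmt6Helpers
open Real Finset

-- reindex Icc 1 L sums
lemma icc_sum (f : ℕ → ℝ) (L : ℕ) :
    ∑ n ∈ Finset.Icc 1 L, f n = ∑ i ∈ Finset.range L, f (i + 1) := by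
  rw [← Finset.Ico_add_one_right_eq_Icc, Finset.sum_Ico_eq_sum_range]
  simp [add_comm]

-- Bernoulli for negative exponents: (1+t)^(-s) ≥ 1 - s*t
lemma bern_neg {s t : ℝ} (hs : 0 < s) (ht : 0 ≤ t) : 1 - s * t ≤ (1 + t) ^ (-s) := by
  have h1t : (0:ℝ) < 1 + t := by linarith
  rcases le_or_gt 1 (s * t) with h | h
  · have : (0:ℝ) < (1 + t) ^ (-s) := Real.rpow_pos_of_pos h1t _
    linarith
  rcases le_or_gt s 1 with hs1 | hs1
  · -- (1+t)^s ≤ 1 + s*t, so (1+t)^(-s) = ((1+t)^s)⁻¹ ≥ (1+s*t)⁻¹ ≥ 1 - s*t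
    have h2 : (1 + t) ^ s ≤ 1 + s * t :=
      rpow_one_add_le_one_add_mul_self (by linarith) hs.le hs1
    have hp : (0:ℝ) < (1 + t) ^ s := Real.rpow_pos_of_pos h1t _
    have h3 : ((1:ℝ) + s * t)⁻¹ ≤ ((1 + t) ^ s)⁻¹ := by
      apply inv_anti₀ hp h2
    have h4 : 1 - s * t ≤ ((1:ℝ) + s * t)⁻¹ := by
      have hpos : (0:ℝ) < 1 + s*t := by positivity
      have key : (1-s*t)*(1+s*t) ≤ 1 := by nlinarith [sq_nonneg (s*t)]
      calc 1-s*t = (1-s*t)*(1+s*t)/(1+s*t) := by field_simp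
        _ ≤ 1/(1+s*t) := by apply div_le_div_of_nonneg_right key hpos.le |>.trans_eq rfl
        _ = (1+s*t)⁻¹ := one_div _
    calc 1 - s*t ≤ ((1:ℝ) + s*t)⁻¹ := h4
      _ ≤ ((1+t)^s)⁻¹ := h3
      _ = (1+t)^(-s) := by rw [← Real.rpow_neg h1t.le, Real.rpow_neg h1t.le s]
  · -- s ≥ 1: (1+t)^(-s) = (1 - t/(1+t))^s ≥ 1 - s*t/(1+t) ≥ 1 - s*t
    have hz : (-1:ℝ) ≤ -(t/(1+t)) := by
      have : t/(1+t) ≤ 1 := by rw [div_le_one h1t]; linarith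
      linarith
    have hb := one_add_mul_self_le_rpow_one_add hz hs1.le
    have he : (1 + -(t/(1+t))) = (1+t)⁻¹ := by
      field_simp; ring
    rw [he] at hb
    have : ((1+t)⁻¹) ^ s = (1+t)^(-s) := by
      rw [Real.inv_rpow h1t.le, ← Real.rpow_neg h1t.le]
    rw [this] at hb
    have : 1 - s*t ≤ 1 + s * -(t/(1+t)) := by
      have : s * (t/(1+t)) ≤ s * t := by
        apply mul_le_mul_of_nonneg_left _ (by linarith)
        rw [div_le_iff₀ h1t]; nlinarith
      linarith
    linarith

-- x^(-s) - (x+1)^(-s) ≤ s * x^(-s-1) for x ≥ 1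
lemma diff_bound {s x : ℝ} (hs : 0 < s) (hx : 1 ≤ x) :
    x ^ (-s) - (x + 1) ^ (-s) ≤ s * x ^ (-s - 1) := by
  have hx0 : (0:ℝ) < x := lt_of_lt_of_le one_pos hx
  have key : x ^ (-s) * (1 - s * (1/x)) ≤ (x + 1) ^ (-s) := by
    have h1 : (x + 1) ^ (-s) = x ^ (-s) * (1 + 1/x) ^ (-s) := by
      rw [← Real.mul_rpow hx0.le (by positivity)]
      congr 1
      field_simp
    rw [h1]
    apply mul_le_mul_of_nonneg_left (bern_neg hs (by positivity)) (Real.rpow_nonneg hx0.le _)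
  have h2 : x ^ (-s) * (1 - s * (1/x)) = x ^ (-s) - s * x ^ (-s - 1) := by
    have : x ^ (-s - 1) = x ^ (-s) * x⁻¹ := by
      rw [← Real.rpow_neg_one x, ← Real.rpow_add hx0]
      ring_nf
    rw [this]
    field_simp
  rw [h2] at key
  linarith

-- x^(e-1) ≤ (2/e) * ((x+1)^e - x^e) for x ≥ 1, e > 0
lemma step_bound {e x : ℝ} (he : 0 < e) (hx : 1 ≤ x) :
    x ^ (e - 1) ≤ (2 / e) * ((x + 1) ^ e - x ^ e) := by
  have hx0 : (0:ℝ) < x := lt_of_lt_of_le one_pos hx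
  have hx1 : (0:ℝ) < x + 1 := by linarith
  have hxe1 : (0:ℝ) ≤ x ^ (e - 1) := Real.rpow_nonneg hx0.le _
  rcases le_or_gt 1 e with he1 | he1
  · -- e ≥ 1 : (x+1)^e ≥ x^e + e * x^(e-1)
    have hb := one_add_mul_self_le_rpow_one_add (s := 1/x) (le_trans (by norm_num : (-1:ℝ) ≤ 0) (by positivity)) he1
    have h1 : (x + 1) ^ e = x ^ e * (1 + 1/x) ^ e := by
      rw [← Real.mul_rpow hx0.le (by positivity)]
      congr 1; field_simp
    have h2 : x ^ e * (1 + e * (1/x)) = x ^ e + e * x ^ (e - 1) := by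
      have : x ^ (e - 1) = x ^ e * x⁻¹ := by
        rw [← Real.rpow_neg_one x, ← Real.rpow_add hx0]; ring_nf
      rw [this]; field_simp
    have h3 : x ^ e + e * x ^ (e-1) ≤ (x+1)^e := by
      rw [h1, ← h2]
      exact mul_le_mul_of_nonneg_left hb (Real.rpow_nonneg hx0.le _)
    have h5 : e * x ^ (e-1) ≤ (x+1)^e - x^e := by linarith
    have h6 := mul_le_mul_of_nonneg_left h5 (by positivity : (0:ℝ) ≤ 2/e)
    have heq : (2/e) * (e * x^(e-1)) = 2 * x^(e-1) := by field_simp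
    rw [heq] at h6
    linarith
  · -- e < 1
    have hu1 : 1/(x+1) ≤ 1 := by rw [div_le_one hx1]; linarith
    have hb : (1 - 1/(x+1)) ^ e ≤ 1 - e * (1/(x+1)) := by
      have := rpow_one_add_le_one_add_mul_self
        (by linarith : (-1:ℝ) ≤ -(1/(x+1))) he.le he1.le
      simpa [sub_eq_add_neg, mul_neg] using this
    have hxx : 1 - 1/(x+1) = x/(x+1) := by field_simp; ring
    have h1 : x ^ e = (x+1) ^ e * (x/(x+1)) ^ e := by
      rw [← Real.mul_rpow hx1.le (by positivity)]
      congr 1; field_simp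
    have h3 : (x+1) ^ (e-1) = (x+1) ^ e * (x+1)⁻¹ := by
      rw [← Real.rpow_neg_one (x+1), ← Real.rpow_add hx1]; ring_nf
    have h5 : e * (1/(x+1)) ≤ 1 - (x/(x+1))^e := by rw [← hxx]; linarith
    have h2 : e * (x+1)^(e-1) ≤ (x+1)^e - x^e := by
      calc e * (x+1)^(e-1) = (x+1)^e * (e * (1/(x+1))) := by rw [h3]; ring
        _ ≤ (x+1)^e * (1 - (x/(x+1))^e) :=
            mul_le_mul_of_nonneg_left h5 (Real.rpow_nonneg hx1.le _)
        _ = (x+1)^e - x^e := by rw [h1]; ring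
    have h4 : x ^ (e-1) ≤ 2 * (x+1) ^ (e-1) := by
      have hA : ((x+1):ℝ)^(e-1) * (x+1)^(1-e) = 1 := by
        rw [← Real.rpow_add hx1]; norm_num
      have hB : x^(1-e) * x^(e-1) = 1 := by
        rw [← Real.rpow_add hx0]; norm_num
      have hb2 : ((x+1)/x) ^ (1-e) ≤ 2 := by
        have hd : (x+1)/x ≤ 2 := by rw [div_le_iff₀ hx0]; linarith
        have hd1 : (1:ℝ) ≤ (x+1)/x := by rw [le_div_iff₀ hx0]; linarith
        calc ((x+1)/x) ^ (1-e) ≤ ((x+1)/x) ^ (1:ℝ) :=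
              Real.rpow_le_rpow_of_exponent_le hd1 (by linarith)
          _ = (x+1)/x := Real.rpow_one _
          _ ≤ 2 := hd
      have hr : x ^ (e-1) = (x+1) ^ (e-1) * ((x+1)/x) ^ (1-e) := by
        rw [Real.div_rpow hx1.le hx0.le]
        have hne : x ^ (1-e) ≠ 0 := by positivity
        field_simp
        rw [← Real.rpow_add hx0, ← Real.rpow_add hx1]
        norm_num
      rw [hr]
      calc (x+1) ^ (e-1) * ((x+1)/x) ^ (1-e) ≤ (x+1) ^ (e-1) * 2 :=
            mul_le_mul_of_nonneg_left hb2 (Real.rpow_nonneg hx1.le _)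
        _ = 2 * (x+1) ^ (e-1) := by ring
    calc x ^ (e-1) ≤ 2 * (x+1) ^ (e-1) := h4
      _ = (2/e) * (e * (x+1)^(e-1)) := by field_simp
      _ ≤ (2/e) * ((x+1)^e - x^e) :=
          mul_le_mul_of_nonneg_left h2 (by positivity)

-- Sum bound: ∑_{i<L} (i+2)^(e-1) ≤ (2/e) * (L+2)^e
lemma sum_pow_bound {e : ℝ} (he : 0 < e) (L : ℕ) :
    ∑ i ∈ Finset.range L, ((i:ℝ) + 2) ^ (e - 1) ≤ (2/e) * ((L:ℝ) + 2) ^ e := by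
  induction L with
  | zero => simp; positivity
  | succ L ih =>
    rw [Finset.sum_range_succ]
    have hstep := step_bound he (by push_cast; linarith : (1:ℝ) ≤ (L:ℝ) + 2)
    push_cast
    push_cast at ih hstep
    have h32 : ((L:ℝ) + 1 + 2) ^ e = ((L:ℝ) + 2 + 1) ^ e := by rw [show ((L:ℝ)+1+2) = ((L:ℝ)+2+1) by ring]
    rw [h32]; linarith

-- Abel summation identity
lemma abel_sum (a v : ℕ → ℝ) (L : ℕ) :
    ∑ i ∈ Finset.range L, a i * v i =
      a L * (∑ i ∈ Finset.range L, v i) +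
      ∑ i ∈ Finset.range L, (a i - a (i+1)) * (∑ j ∈ Finset.range (i+1), v j) := by
  induction L with
  | zero => simp
  | succ L ih =>
    rw [Finset.sum_range_succ, ih, Finset.sum_range_succ (f := fun i => (a i - a (i+1)) * _),
      Finset.sum_range_succ (f := v)]
    ring

end Stmt6Helpers

open Real Finset

theorem stmt6 (u₁ u₂ w : ℕ → ℝ) (γ₁ γ₂ γ C : ℝ)
    (hγ₁ : 0 < γ₁) (hγ₁₂ : γ₁ ≤ γ₂) (hγ : γ₂ - γ₁ < γ) (hC : 0 < C)
    (hu : ∃ L₀ : ℕ, ∀ L : ℕ, L₀ ≤ L →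
      (L : ℝ) ^ γ₁ ≤ trnorm u₁ L ∧ trnorm u₂ L ≤ (L : ℝ) ^ γ₂)
    (hw : ∀ n : ℕ, |w n| ≤ C * (1 + (n : ℝ)) ^ (-γ)) :
    Filter.Tendsto (fun L : ℕ => trnorm (fun n => w n * u₂ n) L / trnorm u₁ L)
      Filter.atTop (nhds 0) := by
  obtain ⟨L₀, hL₀⟩ := hu
  set γ' : ℝ := min γ (γ₂ - γ₁/2) with hγ'def
  have hγ'le : γ' ≤ γ := min_le_left _ _
  have hγ'lt : γ₂ - γ₁ < γ' := lt_min hγ (by linarith)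
  have hγ'ub : γ' ≤ γ₂ - γ₁/2 := min_le_right _ _
  set s : ℝ := 2*γ' with hsdef
  set e : ℝ := 2*γ₂ - 2*γ' with hedef
  have hs : 0 < s := by rw [hsdef]; linarith
  have he : 0 < e := by rw [hedef]; linarith
  have hee : e < 2*γ₁ := by rw [hedef]; linarith
  set v : ℕ → ℝ := fun i => (u₂ (i+1))^2 with hvdef
  set a : ℕ → ℝ := fun i => ((i:ℝ)+2) ^ (-s) with hadef
  set S : ℕ → ℝ := fun n => ∑ i ∈ Finset.range n, v i with hSdef
  have hv : ∀ i, 0 ≤ v i := fun i => sq_nonneg _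
  have hS0 : ∀ n, 0 ≤ S n := fun n => Finset.sum_nonneg (fun i _ => hv i)
  have hSmono : ∀ m n, m ≤ n → S m ≤ S n := by
    intro m n hmn
    exact Finset.sum_le_sum_of_subset_of_nonneg
      (Finset.range_subset_range.mpr hmn) (fun i _ _ => hv i)
  have htr2 : ∀ L, (trnorm u₂ L)^2 = S L := by
    intro L
    rw [trnorm, Real.sq_sqrt (Finset.sum_nonneg (fun i _ => sq_nonneg _)), icc_sum]
  have hSle : ∀ n : ℕ, L₀ ≤ n → 1 ≤ n → S n ≤ ((n:ℝ)) ^ (2*γ₂) := by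
    intro n hn hn1
    have h2 := (hL₀ n hn).2
    have hn0 : (0:ℝ) < (n:ℝ) := by exact_mod_cast hn1
    have hpow : (((n:ℝ)) ^ γ₂)^2 = ((n:ℝ)) ^ (2*γ₂) := by
      rw [← Real.rpow_natCast (((n:ℝ)) ^ γ₂) 2, ← Real.rpow_mul hn0.le]
      norm_num; rw [mul_comm]
    calc S n = (trnorm u₂ n)^2 := (htr2 n).symm
      _ ≤ (((n:ℝ)) ^ γ₂)^2 := by
          apply pow_le_pow_left₀ (Real.sqrt_nonneg _) h2
      _ = ((n:ℝ)) ^ (2*γ₂) := hpow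
  set D : ℝ := S L₀ with hDdef
  have hD0 : 0 ≤ D := hS0 _
  have hSbound : ∀ i : ℕ, S (i+1) ≤ D + ((i:ℝ)+2) ^ (2*γ₂) := by
    intro i
    rcases le_or_gt (i+1) L₀ with h | h
    · have := hSmono (i+1) L₀ h
      have : S (i+1) ≤ D := this
      have hp : (0:ℝ) ≤ ((i:ℝ)+2) ^ (2*γ₂) := Real.rpow_nonneg (by positivity) _
      linarith
    · have h1 : L₀ ≤ i+1 := by omega
      have h2 := hSle (i+1) h1 (by omega)
      have h3 : ((i+1:ℕ):ℝ) ^ (2*γ₂) ≤ ((i:ℝ)+2) ^ (2*γ₂) := by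
        apply Real.rpow_le_rpow (by positivity) (by push_cast; linarith) (by linarith)
      push_cast at h2 h3
      linarith
  have ha_nonneg : ∀ i : ℕ, (0:ℝ) ≤ a i := fun i => Real.rpow_nonneg (by positivity) _
  have ha_anti : ∀ i : ℕ, a (i+1) ≤ a i := by
    intro i
    rw [hadef]
    simp only
    apply Real.rpow_le_rpow_of_nonpos (by positivity) (by push_cast; linarith)
      (by linarith)
  have ha_diff : ∀ i : ℕ, a i - a (i+1) ≤ s * ((i:ℝ)+2)^(-s-1) := by
    intro i
    have h := diff_bound hs (x := (i:ℝ)+2) (by push_cast; linarith)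
    rw [hadef]
    simp only
    push_cast
    convert h using 3 <;> ring
  -- main sum bound
  set K : ℝ := 1 + 2*s/e with hKdef
  have hK0 : 0 < K := by rw [hKdef]; positivity
  have hT : ∀ L : ℕ, L₀ ≤ L → 1 ≤ L →
      ∑ i ∈ Finset.range L, a i * v i ≤ D + K * ((L:ℝ)+2)^e := by
    intro L hL hL1
    rw [abel_sum a v L]
    have hterm1 : a L * S L ≤ ((L:ℝ)+2)^e := by
      have h1 : S L ≤ ((L:ℝ)+2) ^ (2*γ₂) := by
        calc S L ≤ ((L:ℝ)) ^ (2*γ₂) := hSle L hL hL1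
          _ ≤ ((L:ℝ)+2) ^ (2*γ₂) := by
              apply Real.rpow_le_rpow (by positivity) (by linarith) (by linarith)
      calc a L * S L ≤ a L * ((L:ℝ)+2) ^ (2*γ₂) :=
            mul_le_mul_of_nonneg_left h1 (ha_nonneg L)
        _ = ((L:ℝ)+2)^e := by
            rw [hadef]; simp only
            rw [← Real.rpow_add (by positivity)]
            congr 1
            rw [hedef]; ring
    have hterm2 : ∑ i ∈ Finset.range L, (a i - a (i+1)) * S (i+1)
        ≤ D + (2*s/e) * ((L:ℝ)+2)^e := by
      have step1 : ∑ i ∈ Finset.range L, (a i - a (i+1)) * S (i+1)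
          ≤ ∑ i ∈ Finset.range L, (a i - a (i+1)) * (D + ((i:ℝ)+2) ^ (2*γ₂)) := by
        apply Finset.sum_le_sum
        intro i _
        exact mul_le_mul_of_nonneg_left (hSbound i) (by linarith [ha_anti i])
      have step2 : ∑ i ∈ Finset.range L, (a i - a (i+1)) * (D + ((i:ℝ)+2) ^ (2*γ₂))
          = (∑ i ∈ Finset.range L, (a i - a (i+1))) * D
            + ∑ i ∈ Finset.range L, (a i - a (i+1)) * ((i:ℝ)+2) ^ (2*γ₂) := by
        rw [Finset.sum_mul, ← Finset.sum_add_distrib]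
        exact Finset.sum_congr rfl fun i _ => by ring
      have step3 : (∑ i ∈ Finset.range L, (a i - a (i+1))) * D ≤ D := by
        rw [Finset.sum_range_sub' a L]
        have ha0 : a 0 ≤ 1 := by
          rw [hadef]; simp only
          norm_num
          apply Real.rpow_le_one_of_one_le_of_nonpos (by norm_num) (by linarith)
        have := ha_nonneg L
        nlinarith
      have step4 : ∑ i ∈ Finset.range L, (a i - a (i+1)) * ((i:ℝ)+2) ^ (2*γ₂)
          ≤ (2*s/e) * ((L:ℝ)+2)^e := by
        have h1 : ∀ i ∈ Finset.range L,
            (a i - a (i+1)) * ((i:ℝ)+2) ^ (2*γ₂) ≤ s * ((i:ℝ)+2)^(e-1) := by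
          intro i _
          calc (a i - a (i+1)) * ((i:ℝ)+2) ^ (2*γ₂)
              ≤ (s * ((i:ℝ)+2)^(-s-1)) * ((i:ℝ)+2) ^ (2*γ₂) :=
                mul_le_mul_of_nonneg_right (ha_diff i) (Real.rpow_nonneg (by positivity) _)
            _ = s * ((i:ℝ)+2)^(e-1) := by
                rw [mul_assoc, ← Real.rpow_add (by positivity)]
                congr 2
                rw [hedef]; ring
        calc ∑ i ∈ Finset.range L, (a i - a (i+1)) * ((i:ℝ)+2) ^ (2*γ₂)
            ≤ ∑ i ∈ Finset.range L, s * ((i:ℝ)+2)^(e-1) := Finset.sum_le_sum h1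
          _ = s * ∑ i ∈ Finset.range L, ((i:ℝ)+2)^(e-1) := by rw [Finset.mul_sum]
          _ ≤ s * ((2/e) * ((L:ℝ)+2)^e) :=
              mul_le_mul_of_nonneg_left (sum_pow_bound he L) hs.le
          _ = (2*s/e) * ((L:ℝ)+2)^e := by ring
      calc ∑ i ∈ Finset.range L, (a i - a (i+1)) * S (i+1)
          ≤ (∑ i ∈ Finset.range L, (a i - a (i+1))) * D
            + ∑ i ∈ Finset.range L, (a i - a (i+1)) * ((i:ℝ)+2) ^ (2*γ₂) := by
            rw [← step2]; exact step1
        _ ≤ D + (2*s/e) * ((L:ℝ)+2)^e := add_le_add step3 step4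
    have : a L * (∑ i ∈ Finset.range L, v i) = a L * S L := rfl
    rw [this]
    calc a L * S L + ∑ i ∈ Finset.range L, (a i - a (i+1)) * S (i+1)
        ≤ ((L:ℝ)+2)^e + (D + (2*s/e) * ((L:ℝ)+2)^e) := add_le_add hterm1 hterm2
      _ = D + K * ((L:ℝ)+2)^e := by rw [hKdef]; ring
  -- numerator bound
  have hnum : ∀ L : ℕ, trnorm (fun n => w n * u₂ n) L
      ≤ C * Real.sqrt (∑ i ∈ Finset.range L, a i * v i) := by
    intro L
    rw [trnorm, icc_sum]
    have hterm : ∀ i ∈ Finset.range L,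
        ((fun n => w n * u₂ n) (i+1))^2 ≤ C^2 * (a i * v i) := by
      intro i _
      simp only
      have hb : (1:ℝ) ≤ 1 + ((i+1:ℕ):ℝ) := by push_cast; linarith
      have hw1 : |w (i+1)| ≤ C * (1 + ((i+1:ℕ):ℝ)) ^ (-γ') := by
        calc |w (i+1)| ≤ C * (1 + ((i+1:ℕ):ℝ)) ^ (-γ) := hw (i+1)
          _ ≤ C * (1 + ((i+1:ℕ):ℝ)) ^ (-γ') := by
              apply mul_le_mul_of_nonneg_left _ hC.le
              exact Real.rpow_le_rpow_of_exponent_le hb (by linarith)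
      have hsq : (w (i+1))^2 ≤ C^2 * ((i:ℝ)+2)^(-s) := by
        have h1 : (w (i+1))^2 = |w (i+1)|^2 := (sq_abs _).symm
        have h2 : |w (i+1)|^2 ≤ (C * (1 + ((i+1:ℕ):ℝ)) ^ (-γ'))^2 :=
          pow_le_pow_left₀ (abs_nonneg _) hw1 2
        have h3 : (C * (1 + ((i+1:ℕ):ℝ)) ^ (-γ'))^2 = C^2 * ((i:ℝ)+2)^(-s) := by
          rw [mul_pow]
          congr 1
          rw [← Real.rpow_natCast ((1 + ((i+1:ℕ):ℝ)) ^ (-γ')) 2,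
            ← Real.rpow_mul (by positivity)]
          rw [show (1 + ((i+1:ℕ):ℝ)) = (i:ℝ)+2 by push_cast; ring]
          congr 1
          rw [hsdef]; push_cast; ring
        rw [h1]; rw [h3] at h2; exact h2
      calc (w (i+1) * u₂ (i+1))^2 = (w (i+1))^2 * (u₂ (i+1))^2 := by ring
        _ ≤ (C^2 * ((i:ℝ)+2)^(-s)) * (u₂ (i+1))^2 :=
            mul_le_mul_of_nonneg_right hsq (sq_nonneg _)
        _ = C^2 * (a i * v i) := by rw [hadef, hvdef]; ring
    calc Real.sqrt (∑ i ∈ Finset.range L, ((fun n => w n * u₂ n) (i+1))^2)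
        ≤ Real.sqrt (∑ i ∈ Finset.range L, C^2 * (a i * v i)) :=
          Real.sqrt_le_sqrt (Finset.sum_le_sum hterm)
      _ = C * Real.sqrt (∑ i ∈ Finset.range L, a i * v i) := by
          rw [← Finset.mul_sum, Real.sqrt_mul (sq_nonneg C), Real.sqrt_sq hC.le]
  -- assembly
  set B : ℝ := C * Real.sqrt (D + K * 3^e) with hBdef
  apply squeeze_zero' (g := fun L : ℕ => B * (L:ℝ)^(e/2 - γ₁))
  · exact Filter.Eventually.of_forall fun L =>
      div_nonneg (Real.sqrt_nonneg _) (Real.sqrt_nonneg _)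
  · rw [Filter.eventually_atTop]
    refine ⟨max L₀ 1, fun L hL => ?_⟩
    have hLL₀ : L₀ ≤ L := le_trans (le_max_left _ _) hL
    have hL1 : 1 ≤ L := le_trans (le_max_right _ _) hL
    have hLpos : (0:ℝ) < (L:ℝ) := by exact_mod_cast hL1
    have hL1' : (1:ℝ) ≤ (L:ℝ) := by exact_mod_cast hL1
    have hden : ((L:ℝ)) ^ γ₁ ≤ trnorm u₁ L := (hL₀ L hLL₀).1
    have hdenpos : (0:ℝ) < ((L:ℝ)) ^ γ₁ := Real.rpow_pos_of_pos hLpos _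
    have hsum0 : (0:ℝ) ≤ ∑ i ∈ Finset.range L, a i * v i :=
      Finset.sum_nonneg fun i _ => mul_nonneg (ha_nonneg i) (hv i)
    -- inner bound
    have hinner : D + K * ((L:ℝ)+2)^e ≤ (D + K * 3^e) * ((L:ℝ))^e := by
      have h32 : ((L:ℝ)+2)^e ≤ 3^e * ((L:ℝ))^e := by
        rw [← Real.mul_rpow (by norm_num) hLpos.le]
        apply Real.rpow_le_rpow (by positivity) (by linarith) he.le
      have hLe1 : (1:ℝ) ≤ ((L:ℝ))^e := Real.one_le_rpow hL1' he.le
      have hK3 : (0:ℝ) ≤ K * 3^e := mul_nonneg hK0.le (Real.rpow_nonneg (by norm_num) _)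
      nlinarith
    have hchain : trnorm (fun n => w n * u₂ n) L / trnorm u₁ L
        ≤ B * (L:ℝ)^(e/2 - γ₁) := by
      calc trnorm (fun n => w n * u₂ n) L / trnorm u₁ L
          ≤ trnorm (fun n => w n * u₂ n) L / ((L:ℝ)) ^ γ₁ :=
            div_le_div_of_nonneg_left (Real.sqrt_nonneg _) hdenpos hden
        _ ≤ (C * Real.sqrt (∑ i ∈ Finset.range L, a i * v i)) / ((L:ℝ)) ^ γ₁ :=
            div_le_div_of_nonneg_right (hnum L) hdenpos.le
        _ ≤ (C * Real.sqrt ((D + K * 3^e) * ((L:ℝ))^e)) / ((L:ℝ)) ^ γ₁ := by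
            apply div_le_div_of_nonneg_right _ hdenpos.le
            apply mul_le_mul_of_nonneg_left _ hC.le
            apply Real.sqrt_le_sqrt
            exact le_trans (hT L hLL₀ hL1) hinner
        _ = B * (L:ℝ)^(e/2 - γ₁) := by
            rw [Real.sqrt_mul (by positivity) , hBdef]
            have hsq : Real.sqrt (((L:ℝ))^e) = ((L:ℝ))^(e/2) := by
              rw [Real.sqrt_eq_rpow, ← Real.rpow_mul hLpos.le]
              congr 1; ring
            rw [hsq, Real.rpow_sub hLpos]
            ring
    exact hchain
  · have hpos : 0 < γ₁ - e/2 := by linarith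
    have h := (tendsto_rpow_neg_atTop hpos).comp
      (tendsto_natCast_atTop_atTop (R := ℝ))
    have h2 := h.const_mul B
    simp only [mul_zero] at h2
    convert h2 using 2 with L
    · rw [show e/2 - γ₁ = -(γ₁ - e/2) by ring]
      rfl
end

section
/- Let u₁, u₂ : ℕ → ℝ satisfy the power-law bounds C₁L^{γ₁} ≤ ‖u_i‖_L ≤ C₂L^{γ₂} for i = 1,2 and all large L, with 0 < γ₁ ≤ γ₂ and C₁, C₂ > 0. Let P : ℕ → ℝ satisfy |P(n)| ≤ C₃(1+n)^{-p} with p > 3γ₂ − γ₁, and fix γ with γ₂ − γ₁ < γ < p − 2γ₂. Then each of the series Σ_n |P(n)u₁(n)u₂(n)|, Σ_n |P(n)| |u₂(n)|², and Σ_n (1+n)^γ |P(n)| |u₁(n)|² converges. -/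
open Finset

/-- Mean value estimate for the difference of powers. -/
lemma diff_rpow_bound {a x : ℝ} (ha : 0 < a) (hx : 1 ≤ x) :
    x ^ (-a) - (x + 1) ^ (-a) ≤ a * x ^ (-a - 1) := by
  have hx0 : (0:ℝ) < x := lt_of_lt_of_le one_pos hx
  obtain ⟨c, hc, hc'⟩ := exists_hasDerivAt_eq_slope (fun t : ℝ => t ^ (-a))
      (fun t : ℝ => (-a) * t ^ (-a - 1)) (by linarith : x < x + 1)
      (by
        apply ContinuousOn.rpow_const continuousOn_id
        intro t ht
        exact Or.inl (ne_of_gt (lt_of_lt_of_le hx0 ht.1)))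
      (fun t ht => by
        have : (0:ℝ) < t := lt_trans hx0 ht.1
        simpa using Real.hasDerivAt_rpow_const (p := -a) (Or.inl this.ne'))
  have hcx : x < c := hc.1
  have hc0 : (0:ℝ) < c := lt_trans hx0 hcx
  have hslope : x ^ (-a) - (x + 1) ^ (-a) = a * c ^ (-a - 1) := by
    have h1 : (x + 1 - x : ℝ) = 1 := by ring
    rw [h1, div_one] at hc'
    nlinarith [hc']
  rw [hslope]
  have : c ^ (-a - 1) ≤ x ^ (-a - 1) :=
    Real.rpow_le_rpow_of_nonpos hx0 hcx.le (by linarith)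
  exact mul_le_mul_of_nonneg_left this ha.le

/-- Discrete Kiselev–Last–Simon lemma. -/
lemma kls (ψ : ℕ → ℝ) (a b C : ℝ) (hψ : ∀ n, 0 ≤ ψ n)
    (hb : 0 < b) (hab : b < a) (hC : 0 ≤ C)
    (hS : ∀ L : ℕ, 1 ≤ L → ∑ n ∈ Icc 1 L, ψ n ≤ C * (1 + (L:ℝ)) ^ b) :
    Summable (fun n : ℕ => (1 + (n:ℝ)) ^ (-a) * ψ n) := by
  have ha : 0 < a := lt_trans hb hab
  set g : ℕ → ℝ := fun n => (1 + (n:ℝ)) ^ (-a) with hg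
  have hg0 : ∀ n, 0 ≤ g n := fun n => Real.rpow_nonneg (by positivity) _
  have hn1 : ∀ n : ℕ, (1:ℝ) ≤ 1 + (n:ℝ) := fun n => by
    have : (0:ℝ) ≤ n := Nat.cast_nonneg n
    linarith
  -- summable tail weight
  have hsum : Summable (fun m : ℕ => (1 + (m:ℝ)) ^ (b - a - 1)) := by
    have h := (Real.summable_nat_rpow (p := b - a - 1)).2 (by linarith)
    have h2 := (summable_nat_add_iff (f := fun n : ℕ => (n:ℝ) ^ (b - a - 1)) 1).2 h
    refine h2.congr fun m => ?_
    push_cast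
    ring_nf
  set T : ℝ := ∑' m : ℕ, (1 + (m:ℝ)) ^ (b - a - 1) with hT
  have hT0 : 0 ≤ T := tsum_nonneg fun m => Real.rpow_nonneg (by positivity) _
  -- key partial sum bound
  have key : ∀ N : ℕ, 1 ≤ N → ∑ n ∈ Icc 1 N, g n * ψ n ≤ C + a * C * T := by
    intro N hN
    set S : ℕ → ℝ := fun L => ∑ n ∈ Icc 1 L, ψ n with hSdef
    have hS0 : ∀ L, 0 ≤ S L := fun L => Finset.sum_nonneg fun i _ => hψ i
    have tel : ∀ n ∈ Icc 1 N, g n = g N + ∑ m ∈ Ico n N, (g m - g (m+1)) := by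
      intro n hn
      rw [Finset.sum_Ico_eq_sub _ (mem_Icc.1 hn).2, Finset.sum_range_sub' g,
        Finset.sum_range_sub' g]
      ring
    have step1 : ∑ n ∈ Icc 1 N, g n * ψ n
        = g N * S N + ∑ m ∈ Ico 1 N, (g m - g (m+1)) * S m := by
      calc ∑ n ∈ Icc 1 N, g n * ψ n
          = ∑ n ∈ Icc 1 N, (g N * ψ n + ∑ m ∈ Ico n N, (g m - g (m+1)) * ψ n) := by
            refine Finset.sum_congr rfl fun n hn => ?_
            rw [← Finset.sum_mul]
            rw [tel n hn]; ring
        _ = g N * S N + ∑ n ∈ Icc 1 N, ∑ m ∈ Ico n N, (g m - g (m+1)) * ψ n := by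
            rw [Finset.sum_add_distrib, Finset.mul_sum]
        _ = g N * S N + ∑ m ∈ Ico 1 N, ∑ n ∈ Icc 1 m, (g m - g (m+1)) * ψ n := by
            congr 1
            refine Finset.sum_comm' fun n m => ?_
            simp only [mem_Icc, mem_Ico]
            omega
        _ = g N * S N + ∑ m ∈ Ico 1 N, (g m - g (m+1)) * S m := by
            congr 1
            exact Finset.sum_congr rfl fun m _ => by rw [← Finset.mul_sum]
    rw [step1]
    have hb1 : g N * S N ≤ C := by
      have h1 : S N ≤ C * (1 + (N:ℝ)) ^ b := hS N hN
      have h2 : g N * S N ≤ (1 + (N:ℝ)) ^ (-a) * (C * (1 + (N:ℝ)) ^ b) :=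
        mul_le_mul_of_nonneg_left h1 (hg0 N)
      have h3 : (1 + (N:ℝ)) ^ (-a) * (C * (1 + (N:ℝ)) ^ b)
          = C * (1 + (N:ℝ)) ^ (b - a) := by
        rw [show (b - a : ℝ) = b + -a by ring, Real.rpow_add (by positivity)]
        ring
      have h4 : (1 + (N:ℝ)) ^ (b - a) ≤ 1 :=
        Real.rpow_le_one_of_one_le_of_nonpos (hn1 N) (by linarith)
      calc g N * S N ≤ C * (1 + (N:ℝ)) ^ (b - a) := by rw [← h3]; exact h2
        _ ≤ C * 1 := mul_le_mul_of_nonneg_left h4 hC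
        _ = C := mul_one C
    have hb2 : ∑ m ∈ Ico 1 N, (g m - g (m+1)) * S m ≤ a * C * T := by
      have hterm : ∀ m ∈ Ico 1 N,
          (g m - g (m+1)) * S m ≤ a * C * (1 + (m:ℝ)) ^ (b - a - 1) := by
        intro m hm
        have hm1 : 1 ≤ m := (mem_Ico.1 hm).1
        have hd : g m - g (m+1) ≤ a * (1 + (m:ℝ)) ^ (-a - 1) := by
          have := diff_rpow_bound ha (x := 1 + (m:ℝ)) (hn1 m)
          have hcast : g (m+1) = (1 + (m:ℝ) + 1) ^ (-a) := by
            simp only [hg]; push_cast; ring_nf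
          rw [hcast]; exact this
        have h1 : (g m - g (m+1)) * S m ≤ (a * (1 + (m:ℝ)) ^ (-a - 1)) * S m :=
          mul_le_mul_of_nonneg_right hd (hS0 m)
        have h2 : (a * (1 + (m:ℝ)) ^ (-a - 1)) * S m
            ≤ (a * (1 + (m:ℝ)) ^ (-a - 1)) * (C * (1 + (m:ℝ)) ^ b) :=
          mul_le_mul_of_nonneg_left (hS m hm1) (by positivity)
        have h3 : (a * (1 + (m:ℝ)) ^ (-a - 1)) * (C * (1 + (m:ℝ)) ^ b)
            = a * C * (1 + (m:ℝ)) ^ (b - a - 1) := by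
          rw [show (b - a - 1 : ℝ) = (-a - 1) + b by ring,
            Real.rpow_add (by positivity)]
          ring
        linarith
      calc ∑ m ∈ Ico 1 N, (g m - g (m+1)) * S m
          ≤ ∑ m ∈ Ico 1 N, a * C * (1 + (m:ℝ)) ^ (b - a - 1) :=
            Finset.sum_le_sum hterm
        _ = a * C * ∑ m ∈ Ico 1 N, (1 + (m:ℝ)) ^ (b - a - 1) := by
            rw [Finset.mul_sum]
        _ ≤ a * C * T := by
            refine mul_le_mul_of_nonneg_left ?_ (by positivity)
            exact Summable.sum_le_tsum _ (fun m _ => Real.rpow_nonneg (by positivity) _) hsum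
    linarith
  -- conclude
  apply summable_of_sum_range_le (c := g 0 * ψ 0 + (C + a * C * T))
    (fun n => mul_nonneg (hg0 n) (hψ n))
  intro N
  have hsub : Finset.range N ⊆ Finset.Icc 0 N := by
    intro i hi
    simp only [Finset.mem_range] at hi
    simp only [Finset.mem_Icc]
    omega
  have h1 : ∑ i ∈ Finset.range N, g i * ψ i ≤ ∑ i ∈ Icc 0 N, g i * ψ i :=
    Finset.sum_le_sum_of_subset_of_nonneg hsub
      (fun i _ _ => mul_nonneg (hg0 i) (hψ i))
  have h2 : ∑ i ∈ Icc 0 N, g i * ψ i = g 0 * ψ 0 + ∑ i ∈ Icc 1 N, g i * ψ i := by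
    rw [show Icc 0 N = insert 0 (Icc 1 N) by
      ext i; simp [Finset.mem_Icc, Finset.mem_insert]; omega]
    rw [Finset.sum_insert (by simp)]
  rcases Nat.eq_zero_or_pos N with h | h
  · subst h
    simp only [Finset.range_zero, Finset.sum_empty]
    have : 0 ≤ g 0 * ψ 0 := mul_nonneg (hg0 0) (hψ 0)
    have h4 : 0 ≤ a * C * T := by positivity
    linarith
  · have := key N h
    rw [h2] at h1
    linarith

/-- Enlarge the constant to get a partial-sum bound valid for all `L ≥ 1`. -/
lemma adjust (ψ : ℕ → ℝ) (hψ : ∀ n, 0 ≤ ψ n) (b C : ℝ) (hb : 0 ≤ b) (hC : 0 ≤ C)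
    (L₀ : ℕ)
    (h : ∀ L : ℕ, L₀ ≤ L → 1 ≤ L → ∑ n ∈ Icc 1 L, ψ n ≤ C * (L:ℝ) ^ b) :
    ∀ L : ℕ, 1 ≤ L →
      ∑ n ∈ Icc 1 L, ψ n ≤ (C * (max (L₀:ℝ) 1) ^ b) * (1 + (L:ℝ)) ^ b := by
  intro L hL
  set M := max L L₀ with hM
  have hLM : L ≤ M := le_max_left _ _
  have h1 : ∑ n ∈ Icc 1 L, ψ n ≤ ∑ n ∈ Icc 1 M, ψ n :=
    Finset.sum_le_sum_of_subset_of_nonneg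
      (Finset.Icc_subset_Icc le_rfl hLM) (fun i _ _ => hψ i)
  have h2 : ∑ n ∈ Icc 1 M, ψ n ≤ C * (M:ℝ) ^ b :=
    h M (le_max_right _ _) (le_trans hL hLM)
  have hmax1 : (1:ℝ) ≤ max (L₀:ℝ) 1 := le_max_right _ _
  have hL1 : (1:ℝ) ≤ (L:ℝ) := by exact_mod_cast hL
  have h3 : (M:ℝ) ≤ (1 + (L:ℝ)) * max (L₀:ℝ) 1 := by
    have hMc : (M:ℝ) = max (L:ℝ) (L₀:ℝ) := by
      rw [hM]; push_cast [Nat.cast_max]; rfl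
    rw [hMc]
    apply max_le
    · nlinarith
    · nlinarith [le_max_left (L₀:ℝ) 1]
  have h4 : (M:ℝ) ^ b ≤ ((1 + (L:ℝ)) * max (L₀:ℝ) 1) ^ b :=
    Real.rpow_le_rpow (Nat.cast_nonneg M) h3 hb
  have h5 : ((1 + (L:ℝ)) * max (L₀:ℝ) 1) ^ b
      = (1 + (L:ℝ)) ^ b * (max (L₀:ℝ) 1) ^ b :=
    Real.mul_rpow (by positivity) (by positivity)
  calc ∑ n ∈ Icc 1 L, ψ n ≤ C * (M:ℝ) ^ b := le_trans h1 h2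
    _ ≤ C * ((1 + (L:ℝ)) ^ b * (max (L₀:ℝ) 1) ^ b) := by
        rw [← h5]; exact mul_le_mul_of_nonneg_left h4 hC
    _ = (C * (max (L₀:ℝ) 1) ^ b) * (1 + (L:ℝ)) ^ b := by ring

theorem stmt9 (u₁ u₂ P : ℕ → ℝ) (C₁ C₂ C₃ γ₁ γ₂ p γ : ℝ)
    (hC₁ : 0 < C₁) (hC₂ : 0 < C₂) (hC₃ : 0 < C₃)
    (hγ₁ : 0 < γ₁) (h12 : γ₁ ≤ γ₂) (hp : 3 * γ₂ - γ₁ < p)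
    (hγl : γ₂ - γ₁ < γ) (hγu : γ < p - 2 * γ₂)
    (hu : ∃ L₀ : ℕ, ∀ L : ℕ, L₀ ≤ L →
      (C₁ * (L : ℝ) ^ γ₁ ≤ trnorm u₁ L ∧ trnorm u₁ L ≤ C₂ * (L : ℝ) ^ γ₂) ∧
      (C₁ * (L : ℝ) ^ γ₁ ≤ trnorm u₂ L ∧ trnorm u₂ L ≤ C₂ * (L : ℝ) ^ γ₂))
    (hP : ∀ n : ℕ, |P n| ≤ C₃ * (1 + (n : ℝ)) ^ (-p)) :
    Summable (fun n : ℕ => |P n * u₁ n * u₂ n|) ∧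
    Summable (fun n : ℕ => |P n| * (u₂ n) ^ 2) ∧
    Summable (fun n : ℕ => (1 + (n : ℝ)) ^ γ * |P n| * (u₁ n) ^ 2) := by
  obtain ⟨L₀, hL₀⟩ := hu
  have hγ₂ : 0 < γ₂ := lt_of_lt_of_le hγ₁ h12
  have hb : (0:ℝ) < 2 * γ₂ := by linarith
  have hba : 2 * γ₂ < p := by linarith
  -- generic machinery for a nonneg sequence ψ with the right partial-sum bound
  have main : ∀ ψ : ℕ → ℝ, (∀ n, 0 ≤ ψ n) →
      (∀ L : ℕ, L₀ ≤ L → 1 ≤ L →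
        ∑ n ∈ Icc 1 L, ψ n ≤ (C₂ ^ 2) * (L:ℝ) ^ (2 * γ₂)) →
      ∀ a : ℝ, 2 * γ₂ < a →
      Summable (fun n : ℕ => (1 + (n:ℝ)) ^ (-a) * ψ n) := by
    intro ψ hψ hbound a haa
    have hS := adjust ψ hψ (2 * γ₂) (C₂ ^ 2) hb.le (by positivity) L₀ hbound
    exact kls ψ a (2 * γ₂) (C₂ ^ 2 * (max (L₀:ℝ) 1) ^ (2 * γ₂)) hψ hb haa (by positivity) hS
  -- trnorm facts
  have trnonneg : ∀ (u : ℕ → ℝ) (L : ℕ), 0 ≤ trnorm u L := fun u L => Real.sqrt_nonneg _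
  have trsq : ∀ (u : ℕ → ℝ) (L : ℕ), trnorm u L ^ 2 = ∑ n ∈ Icc 1 L, (u n) ^ 2 :=
    fun u L => Real.sq_sqrt (Finset.sum_nonneg fun i _ => sq_nonneg _)
  have hsq : ∀ (u : ℕ → ℝ) (L : ℕ), L₀ ≤ L → 1 ≤ L →
      (trnorm u L ≤ C₂ * (L:ℝ) ^ γ₂) →
      ∑ n ∈ Icc 1 L, (u n) ^ 2 ≤ C₂ ^ 2 * (L:ℝ) ^ (2 * γ₂) := by
    intro u L _ hL1 hup
    have hLpos : (0:ℝ) < L := by exact_mod_cast hL1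
    have hx : (L:ℝ) ^ γ₂ * (L:ℝ) ^ γ₂ = (L:ℝ) ^ (2 * γ₂) := by
      rw [← Real.rpow_add hLpos]; ring_nf
    have h2 : trnorm u L ^ 2 ≤ (C₂ * (L:ℝ) ^ γ₂) ^ 2 := by
      have := mul_le_mul hup hup (trnonneg u L) (by positivity)
      nlinarith [trnonneg u L]
    rw [trsq] at h2
    calc ∑ n ∈ Icc 1 L, (u n) ^ 2 ≤ (C₂ * (L:ℝ) ^ γ₂) ^ 2 := h2
      _ = C₂ ^ 2 * ((L:ℝ) ^ γ₂ * (L:ℝ) ^ γ₂) := by ring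
      _ = C₂ ^ 2 * (L:ℝ) ^ (2 * γ₂) := by rw [hx]
  -- Cauchy-Schwarz
  have cs : ∀ L : ℕ, ∑ n ∈ Icc 1 L, |u₁ n| * |u₂ n| ≤ trnorm u₁ L * trnorm u₂ L := by
    intro L
    have h1 : (∑ n ∈ Icc 1 L, |u₁ n| * |u₂ n|) ^ 2
        ≤ (∑ n ∈ Icc 1 L, (u₁ n) ^ 2) * ∑ n ∈ Icc 1 L, (u₂ n) ^ 2 := by
      have := Finset.sum_mul_sq_le_sq_mul_sq (Finset.Icc 1 L)
        (fun n => |u₁ n|) (fun n => |u₂ n|)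
      simpa [sq_abs] using this
    have h2 : trnorm u₁ L * trnorm u₂ L
        = Real.sqrt ((∑ n ∈ Icc 1 L, (u₁ n) ^ 2) * ∑ n ∈ Icc 1 L, (u₂ n) ^ 2) :=
      (Real.sqrt_mul (Finset.sum_nonneg fun i _ => sq_nonneg _) _).symm
    rw [h2]
    exact Real.le_sqrt_of_sq_le h1
  -- the three summable weighted series
  have S1 : Summable (fun n : ℕ => (1 + (n:ℝ)) ^ (-p) * (|u₁ n| * |u₂ n|)) := by
    refine main _ (fun n => by positivity) ?_ p hba
    intro L hL hL1
    have hLpos : (0:ℝ) < L := by exact_mod_cast hL1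
    have hx : (L:ℝ) ^ γ₂ * (L:ℝ) ^ γ₂ = (L:ℝ) ^ (2 * γ₂) := by
      rw [← Real.rpow_add hLpos]; ring_nf
    have h1 := ((hL₀ L hL).1).2
    have h2 := ((hL₀ L hL).2).2
    calc ∑ n ∈ Icc 1 L, |u₁ n| * |u₂ n| ≤ trnorm u₁ L * trnorm u₂ L := cs L
      _ ≤ (C₂ * (L:ℝ) ^ γ₂) * (C₂ * (L:ℝ) ^ γ₂) :=
          mul_le_mul h1 h2 (trnonneg u₂ L) (by positivity)
      _ = C₂ ^ 2 * ((L:ℝ) ^ γ₂ * (L:ℝ) ^ γ₂) := by ring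
      _ = C₂ ^ 2 * (L:ℝ) ^ (2 * γ₂) := by rw [hx]
  have S2 : Summable (fun n : ℕ => (1 + (n:ℝ)) ^ (-p) * (u₂ n) ^ 2) :=
    main _ (fun n => sq_nonneg _) (fun L hL hL1 => hsq u₂ L hL hL1 ((hL₀ L hL).2.2)) p hba
  have S3 : Summable (fun n : ℕ => (1 + (n:ℝ)) ^ (-(p - γ)) * (u₁ n) ^ 2) :=
    main _ (fun n => sq_nonneg _) (fun L hL hL1 => hsq u₁ L hL hL1 ((hL₀ L hL).1.2))
      (p - γ) (by linarith)
  have h1n : ∀ n : ℕ, (0:ℝ) < 1 + (n:ℝ) := fun n => by positivity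
  refine ⟨?_, ?_, ?_⟩
  · refine Summable.of_nonneg_of_le (fun n => abs_nonneg _) ?_ (S1.mul_left C₃)
    intro n
    calc |P n * u₁ n * u₂ n| = |P n| * (|u₁ n| * |u₂ n|) := by
          rw [abs_mul, abs_mul]; ring
      _ ≤ (C₃ * (1 + (n:ℝ)) ^ (-p)) * (|u₁ n| * |u₂ n|) :=
          mul_le_mul_of_nonneg_right (hP n) (by positivity)
      _ = C₃ * ((1 + (n:ℝ)) ^ (-p) * (|u₁ n| * |u₂ n|)) := by ring
  · refine Summable.of_nonneg_of_le (fun n => by positivity) ?_ (S2.mul_left C₃)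
    intro n
    calc |P n| * (u₂ n) ^ 2 ≤ (C₃ * (1 + (n:ℝ)) ^ (-p)) * (u₂ n) ^ 2 :=
          mul_le_mul_of_nonneg_right (hP n) (sq_nonneg _)
      _ = C₃ * ((1 + (n:ℝ)) ^ (-p) * (u₂ n) ^ 2) := by ring
  · refine Summable.of_nonneg_of_le (fun n => by positivity) ?_ (S3.mul_left C₃)
    intro n
    have hpow : (1 + (n:ℝ)) ^ γ * (1 + (n:ℝ)) ^ (-p) = (1 + (n:ℝ)) ^ (-(p - γ)) := by
      rw [← Real.rpow_add (h1n n)]; ring_nf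
    calc (1 + (n:ℝ)) ^ γ * |P n| * (u₁ n) ^ 2
        ≤ (1 + (n:ℝ)) ^ γ * (C₃ * (1 + (n:ℝ)) ^ (-p)) * (u₁ n) ^ 2 := by
          have h := mul_le_mul_of_nonneg_left (hP n)
            (Real.rpow_nonneg (h1n n).le γ)
          exact mul_le_mul_of_nonneg_right h (sq_nonneg _)
      _ = C₃ * (((1 + (n:ℝ)) ^ γ * (1 + (n:ℝ)) ^ (-p)) * (u₁ n) ^ 2) := by ring
      _ = C₃ * ((1 + (n:ℝ)) ^ (-(p - γ)) * (u₁ n) ^ 2) := by rw [hpow]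
end

section
/- Let μ be a finite Borel measure on ℝ and α ∈ [0,1]. Define D^α_μ(E) = limsup_{ε→0⁺} μ((E−ε, E+ε))/(2ε)^α and T^α_∞ = {E : D^α_μ(E) = ∞}. Then μ decomposes uniquely as μ = μ_{αs} + μ_{αc}, where μ_{αs} = μ restricted to T^α_∞ and μ_{αc} = μ restricted to the complement; μ_{αc} satisfies D^α_{μ_{αc}}(E) < ∞ for μ_{αc}-almost every E. -/
open MeasureTheory Filter

/-- Upper `α`-derivative `D^α_μ(E) = limsup_{ε→0⁺} μ((E−ε,E+ε))/(2ε)^α`. -/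
noncomputable def upperDeriv (μ : Measure ℝ) (α : ℝ) (E : ℝ) : ENNReal :=
  limsup (fun ε : ℝ => μ (Set.Ioo (E - ε) (E + ε)) / ENNReal.ofReal ((2 * ε) ^ α))
    (nhdsWithin 0 (Set.Ioi 0))

open Set in
private lemma meas_Ioo_aux (μ : Measure ℝ) [SFinite μ] (q : ℝ) :
    Measurable fun E : ℝ => μ (Set.Ioo (E - q) (E + q)) := by
  have hs : MeasurableSet {p : ℝ × ℝ | p.1 - q < p.2 ∧ p.2 < p.1 + q} :=
    (measurableSet_lt (measurable_fst.sub measurable_const) measurable_snd).inter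
      (measurableSet_lt measurable_snd (measurable_fst.add measurable_const))
  have h := measurable_measure_prodMk_left (ν := μ) hs
  have heq : ∀ E : ℝ, Set.Ioo (E - q) (E + q)
      = Prod.mk E ⁻¹' {p : ℝ × ℝ | p.1 - q < p.2 ∧ p.2 < p.1 + q} := by
    intro E; ext x; simp [Set.mem_Ioo]
  simpa only [← heq] using h


open Set in
private lemma f_le_sup_rat (μ : Measure ℝ) {α : ℝ} (hα : 0 ≤ α) (E : ℝ) {ε : ℝ} (hε : 0 < ε) :
    μ (Ioo (E - ε) (E + ε)) / ENNReal.ofReal ((2 * ε) ^ α)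
      ≤ ⨆ (q : ℚ) (_ : (q : ℝ) ∈ Ioo 0 ε),
          μ (Ioo (E - (q : ℝ)) (E + (q : ℝ))) / ENNReal.ofReal ((2 * (q : ℝ)) ^ α) := by
  set T := {q : ℚ // (q : ℝ) ∈ Ioo 0 ε}
  have hne : Nonempty T := by
    obtain ⟨q, hq1, hq2⟩ := exists_rat_btwn hε
    exact ⟨⟨q, hq1, hq2⟩⟩
  have hU : Ioo (E - ε) (E + ε) = ⋃ q : T, Ioo (E - (q : ℝ)) (E + (q : ℝ)) := by
    ext x
    simp only [mem_Ioo, mem_iUnion]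
    constructor
    · rintro ⟨h1, h2⟩
      have h3 : |x - E| < ε := abs_lt.2 ⟨by linarith, by linarith⟩
      obtain ⟨q, hq1, hq2⟩ := exists_rat_btwn h3
      exact ⟨⟨q, lt_of_le_of_lt (abs_nonneg _) hq1, hq2⟩, by
        have := abs_lt.1 hq1
        constructor <;> linarith [this.1, this.2]⟩
    · rintro ⟨⟨q, hq1, hq2⟩, h1, h2⟩
      exact ⟨by simp only at h1 ⊢; linarith, by simp only at h2 ⊢; linarith⟩
  have hdir : Directed (· ⊆ ·) fun q : T => Ioo (E - (q : ℝ)) (E + (q : ℝ)) := by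
    intro a b
    rcases le_total (a : ℚ) b with h | h
    · have h' : ((a : ℚ) : ℝ) ≤ ((b : ℚ) : ℝ) := mod_cast h
      exact ⟨b, Ioo_subset_Ioo (by linarith) (by linarith), subset_rfl⟩
    · have h' : ((b : ℚ) : ℝ) ≤ ((a : ℚ) : ℝ) := mod_cast h
      exact ⟨a, subset_rfl, Ioo_subset_Ioo (by linarith) (by linarith)⟩
  rw [hU, hdir.measure_iUnion, ENNReal.iSup_div]
  apply iSup_le
  rintro ⟨q, hq1, hq2⟩
  have hle : ENNReal.ofReal ((2 * (q : ℝ)) ^ α) ≤ ENNReal.ofReal ((2 * ε) ^ α) :=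
    ENNReal.ofReal_le_ofReal (Real.rpow_le_rpow (by linarith) (by linarith) hα)
  refine le_trans (ENNReal.div_le_div le_rfl hle) ?_
  exact le_iSup₂ (f := fun (q : ℚ) (_ : (q : ℝ) ∈ Ioo 0 ε) =>
    μ (Ioo (E - (q : ℝ)) (E + (q : ℝ))) / ENNReal.ofReal ((2 * (q : ℝ)) ^ α)) q ⟨hq1, hq2⟩

open Set in
private lemma upperDeriv_eq_rat (μ : Measure ℝ) {α : ℝ} (hα : 0 ≤ α) (E : ℝ) :
    upperDeriv μ α E = ⨅ n : ℕ, ⨆ (q : ℚ) (_ : (q : ℝ) ∈ Ioo (0 : ℝ) (1 / (n + 1))),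
      μ (Ioo (E - (q : ℝ)) (E + (q : ℝ))) / ENNReal.ofReal ((2 * (q : ℝ)) ^ α) := by
  set f : ℝ → ENNReal := fun ε => μ (Ioo (E - ε) (E + ε)) / ENNReal.ofReal ((2 * ε) ^ α)
  have hbasis := nhdsGT_basis (0 : ℝ)
  have h1 : upperDeriv μ α E = ⨅ (δ : ℝ) (_ : 0 < δ), ⨆ ε ∈ Ioo 0 δ, f ε :=
    hbasis.limsup_eq_iInf_iSup
  have key : ∀ δ : ℝ, 0 < δ → (⨆ ε ∈ Ioo (0 : ℝ) δ, f ε)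
      = ⨆ (q : ℚ) (_ : (q : ℝ) ∈ Ioo 0 δ), f q := by
    intro δ hδ
    apply le_antisymm
    · refine iSup₂_le fun ε hε => ?_
      refine (f_le_sup_rat μ hα E hε.1).trans ?_
      refine iSup₂_le fun q hq => ?_
      exact le_iSup₂ (f := fun (q : ℚ) (_ : (q : ℝ) ∈ Ioo 0 δ) => f q) q
        ⟨hq.1, hq.2.trans hε.2⟩
    · exact iSup₂_le fun q hq => le_iSup₂ (f := fun (ε : ℝ) (_ : ε ∈ Ioo 0 δ) => f ε) (q : ℝ) hq
  rw [h1]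
  apply le_antisymm
  · refine le_iInf fun n => ?_
    have hpos : (0 : ℝ) < 1 / (n + 1) := by positivity
    refine le_trans (iInf₂_le (1 / ((n : ℝ) + 1)) hpos) ?_
    rw [key _ hpos]
  · refine le_iInf₂ fun δ hδ => ?_
    obtain ⟨n, hn⟩ := exists_nat_one_div_lt hδ
    refine le_trans (iInf_le _ n) ?_
    rw [key δ hδ]
    refine iSup₂_le fun q hq => ?_
    exact le_iSup₂ (f := fun (q : ℚ) (_ : (q : ℝ) ∈ Ioo 0 δ) => f q) q
      ⟨hq.1, hq.2.trans hn⟩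

private lemma measurable_upperDeriv (μ : Measure ℝ) [SFinite μ] {α : ℝ} (hα : 0 ≤ α) :
    Measurable (upperDeriv μ α) := by
  have : upperDeriv μ α = fun E => ⨅ n : ℕ,
      ⨆ (q : ℚ) (_ : (q : ℝ) ∈ Set.Ioo (0 : ℝ) (1 / (n + 1))),
      μ (Set.Ioo (E - (q : ℝ)) (E + (q : ℝ))) / ENNReal.ofReal ((2 * (q : ℝ)) ^ α) :=
    funext fun E => upperDeriv_eq_rat μ hα E
  rw [this]
  exact Measurable.iInf fun n => Measurable.iSup fun q => Measurable.iSup fun _ =>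
    (meas_Ioo_aux μ (q : ℝ)).div_const _

theorem stmt11 (μ : Measure ℝ) [IsFiniteMeasure μ] (α : ℝ) (hα : α ∈ Set.Icc (0 : ℝ) 1) :
    μ = μ.restrict {E | upperDeriv μ α E = ⊤} + μ.restrict {E | upperDeriv μ α E = ⊤}ᶜ ∧
    (∀ ν₁ ν₂ : Measure ℝ, μ = ν₁ + ν₂ →
      ν₁ {E | upperDeriv μ α E = ⊤}ᶜ = 0 → ν₂ {E | upperDeriv μ α E = ⊤} = 0 →
      ν₁ = μ.restrict {E | upperDeriv μ α E = ⊤} ∧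
        ν₂ = μ.restrict {E | upperDeriv μ α E = ⊤}ᶜ) ∧
    (∀ᵐ E ∂(μ.restrict {E | upperDeriv μ α E = ⊤}ᶜ),
      upperDeriv (μ.restrict {E | upperDeriv μ α E = ⊤}ᶜ) α E < ⊤) := by
  set S : Set ℝ := {E | upperDeriv μ α E = ⊤} with hS_def
  have hS : MeasurableSet S :=
    (measurable_upperDeriv μ hα.1) (measurableSet_singleton ⊤)
  refine ⟨(Measure.restrict_add_restrict_compl hS).symm, ?_, ?_⟩
  · intro ν₁ ν₂ hsum h₁ h₂
    constructor
    · ext A hA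
      rw [Measure.restrict_apply hA]
      have e1 : ν₁ A = ν₁ (A ∩ S) := by
        apply le_antisymm
        · calc ν₁ A ≤ ν₁ (A ∩ S) + ν₁ (A \ S) := by
                rw [measure_inter_add_diff A hS]
            _ ≤ ν₁ (A ∩ S) + ν₁ Sᶜ := by
                gcongr; exact fun x hx => hx.2
            _ = ν₁ (A ∩ S) := by rw [h₁, add_zero]
        · exact measure_mono Set.inter_subset_left
      have e2 : ν₂ (A ∩ S) = 0 :=
        measure_mono_null Set.inter_subset_right h₂
      rw [e1, hsum]
      simp [Measure.add_apply, e2]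
    · ext A hA
      rw [Measure.restrict_apply hA]
      have e1 : ν₂ A = ν₂ (A ∩ Sᶜ) := by
        apply le_antisymm
        · calc ν₂ A ≤ ν₂ (A ∩ Sᶜ) + ν₂ (A \ Sᶜ) := by
                rw [measure_inter_add_diff A hS.compl]
            _ ≤ ν₂ (A ∩ Sᶜ) + ν₂ S := by
                gcongr; intro x hx; simpa using hx.2
            _ = ν₂ (A ∩ Sᶜ) := by rw [h₂, add_zero]
        · exact measure_mono Set.inter_subset_left
      have e2 : ν₁ (A ∩ Sᶜ) = 0 :=
        measure_mono_null Set.inter_subset_right h₁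
      rw [e1, hsum]
      simp [Measure.add_apply, e2]
  · have hmono : ∀ E, upperDeriv (μ.restrict Sᶜ) α E ≤ upperDeriv μ α E := by
      intro E
      refine limsup_le_limsup (Eventually.of_forall fun ε => ?_)
        isCobounded_le_of_bot isBounded_le_of_top
      refine ENNReal.div_le_div ?_ le_rfl
      rw [Measure.restrict_apply measurableSet_Ioo]
      exact measure_mono Set.inter_subset_left
    filter_upwards [ae_restrict_mem hS.compl] with E hE
    have hne : upperDeriv μ α E ≠ ⊤ := hE
    exact lt_of_le_of_lt (hmono E) (lt_top_iff_ne_top.2 hne)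
end
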